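/- Every natural number N can be written uniquely as N = Σ_{k=0}^n b_{k+1} q_k, where b_k ∈ ℕ, b_1 < a_1, b_k ≤ a_k for all k, and b_{k-1} = 0 whenever b_k = a_k. (Ostrowski representation.) -/

import Mathlib

open Finset

private lemma ost_bound (aCF q : ℕ → ℤ)
    (hq0 : q 0 = 1) (hq1 : q 1 = aCF 1)
    (hqrec : ∀ k, q (k + 2) = aCF (k + 2) * q (k + 1) + q k)
    (hqpos : ∀ k, 1 ≤ q k)
    (b : ℕ → ℕ)
    (hb1 : (b 1 : ℤ) < aCF 1)
    (hble : ∀ k ≥ 1, (b k : ℤ) ≤ aCF k)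
    (hbz : ∀ k ≥ 2, (b k : ℤ) = aCF k → b (k - 1) = 0) :
    ∀ n, ∑ k ∈ range n, (b (k + 1) : ℤ) * q k ≤ q n - 1 := by
  intro n
  induction n using Nat.strong_induction_on with
  | _ n ih =>
    match n with
    | 0 => simp [hq0]
    | 1 =>
      rw [Finset.sum_range_one, hq0]
      simp only [Nat.zero_add, mul_one]
      omega
    | (m + 2) =>
      rw [Finset.sum_range_succ]
      rcases eq_or_lt_of_le (hble (m + 2) (by omega)) with heq | hlt
      · have hz : b (m + 1) = 0 := hbz (m + 2) (by omega) heq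
        have he : ∑ k ∈ range (m + 1), (b (k + 1) : ℤ) * q k
            = ∑ k ∈ range m, (b (k + 1) : ℤ) * q k := by
          rw [Finset.sum_range_succ, hz]; simp
        rw [he, heq, hqrec m]
        have := ih m (by omega)
        linarith
      · have h1 : (b (m + 2) : ℤ) ≤ aCF (m + 2) - 1 := by omega
        have h2 := ih (m + 1) (by omega)
        have h3 := hqpos m
        have h4 := hqpos (m + 1)
        rw [hqrec m]
        nlinarith [mul_le_mul_of_nonneg_right h1 (by linarith : (0:ℤ) ≤ q (m + 1))]

private lemma ost_core (aCF q : ℕ → ℤ)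
    (hq0 : q 0 = 1) (hq1 : q 1 = aCF 1)
    (hqrec : ∀ k, q (k + 2) = aCF (k + 2) * q (k + 1) + q k)
    (hqpos : ∀ k, 1 ≤ q k)
    (c d : ℕ → ℕ)
    (hd1 : (d 1 : ℤ) < aCF 1)
    (hdle : ∀ k ≥ 1, (d k : ℤ) ≤ aCF k)
    (hdz : ∀ k ≥ 2, (d k : ℤ) = aCF k → d (k - 1) = 0)
    (m : ℕ) (hlt : d (m + 1) < c (m + 1))
    (hS : ∑ k ∈ range (m + 1), (c (k + 1) : ℤ) * q k
        = ∑ k ∈ range (m + 1), (d (k + 1) : ℤ) * q k) : False := by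
  have hb := ost_bound aCF q hq0 hq1 hqrec hqpos d hd1 hdle hdz m
  rw [Finset.sum_range_succ, Finset.sum_range_succ] at hS
  have hcnn : (0:ℤ) ≤ ∑ k ∈ range m, (c (k + 1) : ℤ) * q k := by
    apply Finset.sum_nonneg
    intro k _
    have := hqpos k
    positivity
  have hql := hqpos m
  have hcd : (d (m + 1) : ℤ) + 1 ≤ (c (m + 1) : ℤ) := by exact_mod_cast hlt
  nlinarith [mul_le_mul_of_nonneg_right hcd (by linarith : (0:ℤ) ≤ q m)]

private lemma ost_exists (aCF q : ℕ → ℤ)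
    (hq0 : q 0 = 1) (hq1 : q 1 = aCF 1)
    (hqrec : ∀ k, q (k + 2) = aCF (k + 2) * q (k + 1) + q k)
    (hA : ∀ k, 1 ≤ aCF (k + 1)) (hqpos : ∀ k, 1 ≤ q k)
    (hqmono : ∀ k, q k ≤ q (k + 1))
    (hqge : ∀ k : ℕ, (k : ℤ) ≤ q k) :
    ∀ N : ℕ, ∃ b : ℕ → ℕ,
      b 0 = 0 ∧ (b 1 : ℤ) < aCF 1 ∧ (∀ k ≥ 1, (b k : ℤ) ≤ aCF k) ∧
      (∀ k ≥ 2, (b k : ℤ) = aCF k → b (k - 1) = 0) ∧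
      (∀ m, b (m + 1) ≠ 0 → q m ≤ (N : ℤ)) ∧
      ∀ M, N < M → (N : ℤ) = ∑ k ∈ range M, (b (k + 1) : ℤ) * q k := by
  intro N
  induction N using Nat.strong_induction_on with
  | _ N ih =>
    rcases Nat.eq_zero_or_pos N with hN | hN
    · subst hN
      refine ⟨fun _ => 0, rfl, by have h := hA 0; simp only [zero_add] at h; simp only [Nat.cast_zero]; omega, ?_, by simp, by simp, ?_⟩
      · intro k hk
        obtain ⟨m, rfl⟩ : ∃ m, k = m + 1 := ⟨k - 1, by omega⟩
        have h := hA m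
        simp only [Nat.cast_zero]
        omega
      · intro M _; simp
    · -- N ≥ 1
      have hP0 : q 0 ≤ (N : ℤ) := by rw [hq0]; exact_mod_cast hN
      obtain ⟨n, hn, hn1⟩ : ∃ n : ℕ, q n ≤ (N : ℤ) ∧ (N : ℤ) < q (n + 1) := by
        refine ⟨Nat.findGreatest (fun m => q m ≤ (N : ℤ)) N,
          Nat.findGreatest_spec (P := fun m => q m ≤ (N : ℤ)) (Nat.zero_le N) hP0, ?_⟩
        by_cases h : Nat.findGreatest (fun m => q m ≤ (N : ℤ)) N + 1 ≤ N
        · have h3 := Nat.findGreatest_is_greatest (P := fun m => q m ≤ (N : ℤ))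
            (n := N) (Nat.lt_succ_self _) h
          simp only [not_le] at h3
          exact h3
        · have h2 := hqge (Nat.findGreatest (fun m => q m ≤ (N : ℤ)) N + 1)
          push_cast at h2
          omega
      have hnN : n ≤ N := by
        have := hqge n
        have : (n : ℤ) ≤ (N : ℤ) := le_trans this hn
        exact_mod_cast this
      have hqn : 0 < q n := by linarith [hqpos n]
      set c : ℤ := (N : ℤ) / q n with hc_def
      set r : ℤ := (N : ℤ) % q n with hr_def
      have hr0 : 0 ≤ r := Int.emod_nonneg _ (by omega)
      have hrlt : r < q n := Int.emod_lt_of_pos _ hqn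
      have hNcr : (N : ℤ) = c * q n + r := by
        have := Int.mul_ediv_add_emod (N : ℤ) (q n)
        linarith [this]
      have hc1 : 1 ≤ c := by
        rw [hc_def, Int.le_ediv_iff_mul_le hqn]; linarith
      have hcle : c ≤ aCF (n + 1) := by
        have h2 : (N : ℤ) < (aCF (n + 1) + 1) * q n := by
          match n with
          | 0 =>
            have := hA 0
            rw [hq0] at hqn ⊢
            rw [hq1] at hn1
            nlinarith
          | (m + 1) =>
            have h3 := hqrec m
            have h4 := hqmono m
            nlinarith
        have := (Int.ediv_lt_iff_lt_mul hqn).2 h2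
        omega
      have hrcase : ∀ m, n = m + 1 → c = aCF (n + 1) → r < q m := by
        intro m hm hc
        subst hm
        have h3 : q (m + 1 + 1) = aCF (m + 1 + 1) * q (m + 1) + q m := hqrec m
        rw [hc] at hNcr
        omega
      have hrN : r.toNat < N := by omega
      obtain ⟨b', hb'0, hb'1, hb'le, hb'z, hb'sup, hb'sum⟩ := ih r.toNat hrN
      have hrt : (r.toNat : ℤ) = r := Int.toNat_of_nonneg hr0
      rw [hrt] at hb'sup hb'sum
      have hb'n1 : b' (n + 1) = 0 := by
        by_contra h
        have := hb'sup n h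
        omega
      set b : ℕ → ℕ := fun k => if k = n + 1 then c.toNat else b' k with hb_def
      have hct : (c.toNat : ℤ) = c := Int.toNat_of_nonneg (by omega)
      refine ⟨b, ?_, ?_, ?_, ?_, ?_, ?_⟩
      · simp [hb_def, hb'0]
      · by_cases h : n = 0
        · subst h
          simp only [hb_def, if_pos rfl]
          rw [hct]
          rw [hq0] at hNcr
          rw [hq1] at hn1
          omega
        · have : (1:ℕ) ≠ n + 1 := by omega
          simp only [hb_def, if_neg this]
          exact hb'1
      · intro k hk
        by_cases h : k = n + 1
        · subst h; simp only [hb_def, if_pos rfl]; rw [hct]; exact hcle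
        · simp only [hb_def, if_neg h]; exact hb'le k hk
      · intro k hk hbk
        by_cases h : k = n + 1
        · subst h
          simp only [hb_def, if_pos rfl] at hbk ⊢
          rw [hct] at hbk
          have hn1' : 1 ≤ n := by omega
          obtain ⟨m, hm⟩ : ∃ m, n = m + 1 := ⟨n - 1, by omega⟩
          have hr' := hrcase m hm hbk
          have : (n + 1 - 1 : ℕ) = m + 1 := by omega
          rw [this, if_neg (by omega)]
          by_contra h2
          have := hb'sup m h2
          omega
        · simp only [hb_def, if_neg h] at hbk ⊢
          by_cases h2 : k = n + 2
          · exfalso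
            subst h2
            have hA' : (1:ℤ) ≤ aCF (n + 2) := hA (n + 1)
            have hne : b' (n + 2) ≠ 0 := by
              intro h3
              rw [h3] at hbk
              simp only [Nat.cast_zero] at hbk
              omega
            have hs : q (n + 1) ≤ r := hb'sup (n + 1) hne
            have hmn := hqmono n
            omega
          · have h3 := hb'z k hk hbk
            have : k - 1 ≠ n + 1 := by omega
            rw [if_neg this]
            exact h3
      · intro m hm
        by_cases h : m = n
        · subst h; exact hn
        · simp only [hb_def, if_neg (by omega : m + 1 ≠ n + 1)] at hm
          have := hb'sup m hm
          omega
      · intro M hM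
        have hnM : n < M := by omega
        have hmem : n ∈ range M := mem_range.2 hnM
        have hsum' := hb'sum M (by omega)
        rw [← Finset.add_sum_erase _ _ hmem] at hsum' ⊢
        have hcongr : ∑ k ∈ (range M).erase n, (b (k + 1) : ℤ) * q k
            = ∑ k ∈ (range M).erase n, (b' (k + 1) : ℤ) * q k := by
          apply Finset.sum_congr rfl
          intro k hk
          have hkn : k ≠ n := Finset.ne_of_mem_erase hk
          have h2 : b (k + 1) = b' (k + 1) := by
            simp only [hb_def]
            rw [if_neg (by omega : ¬ (k + 1 = n + 1))]
          rw [h2]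
        rw [hcongr]
        simp only [hb_def, if_pos rfl, hb'n1] at *
        rw [hct]
        push_cast at hsum' ⊢
        linarith

theorem ostrowski_representation (a : ℝ) (ha : Irrational a)
    (aCF : ℕ → ℤ) (ζ : ℕ → ℝ)
    (hζ0 : ζ 0 = a)
    (hfloor : ∀ k, aCF k = ⌊ζ k⌋)
    (hζ : ∀ k, ζ k = (aCF k : ℝ) + 1 / ζ (k + 1))
    (p q : ℕ → ℤ)
    (hq0 : q 0 = 1) (hq1 : q 1 = aCF 1)
    (hqrec : ∀ k, q (k + 2) = aCF (k + 2) * q (k + 1) + q k)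
    (hp0 : p 0 = aCF 0) (hp1 : p 1 = aCF 1 * aCF 0 + 1)
    (hprec : ∀ k, p (k + 2) = aCF (k + 2) * p (k + 1) + p k)
    (β : ℕ → ℝ)
    (hβ : ∀ k, β k = (q k : ℝ) * a - (p k : ℝ)) (N : ℕ) :
    ∃! b : ℕ → ℕ,
      {k | b k ≠ 0}.Finite ∧
      b 0 = 0 ∧
      (b 1 : ℤ) < aCF 1 ∧
      (∀ k ≥ 1, (b k : ℤ) ≤ aCF k) ∧
      (∀ k ≥ 2, (b k : ℤ) = aCF k → b (k - 1) = 0) ∧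
      (N : ℤ) = ∑ᶠ k : ℕ, (b (k + 1) : ℤ) * q k := by
  -- basic facts about the continued fraction
  have irr : ∀ k, Irrational (ζ k) := by
    intro k
    induction k with
    | zero => rwa [hζ0]
    | succ k ihk =>
      have h1 : (ζ (k + 1))⁻¹ = ζ k - (aCF k : ℝ) := by
        have := hζ k
        rw [one_div] at this
        linarith
      exact Irrational.of_inv (h1 ▸ Irrational.sub_intCast ihk _)
  have gt1 : ∀ k, 1 < ζ (k + 1) := by
    intro k
    have h1 : (ζ (k + 1))⁻¹ = ζ k - (aCF k : ℝ) := by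
      have := hζ k
      rw [one_div] at this
      linarith
    have h2 : ζ k - (aCF k : ℝ) = Int.fract (ζ k) := by
      rw [hfloor k]; rw [Int.fract]
    have h3 : 0 < Int.fract (ζ k) := by
      rcases lt_or_eq_of_le (Int.fract_nonneg (ζ k)) with h | h
      · exact h
      · exfalso
        rw [Int.fract] at h
        exact (irr k).ne_int ⌊ζ k⌋ (by linarith)
    have h4 : Int.fract (ζ k) < 1 := Int.fract_lt_one _
    have h5 : 0 < (ζ (k + 1))⁻¹ := by rw [h1, h2]; exact h3
    have h6 : (ζ (k + 1))⁻¹ < 1 := by rw [h1, h2]; exact h4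
    have h7 : 0 < ζ (k + 1) := by
      by_contra h
      push_neg at h
      have := inv_nonpos.2 h
      linarith
    have h8 : ζ (k + 1) * (ζ (k + 1))⁻¹ = 1 := mul_inv_cancel₀ (ne_of_gt h7)
    nlinarith [mul_pos h7 (by linarith : (0:ℝ) < 1 - (ζ (k + 1))⁻¹)]
  have hA : ∀ k, 1 ≤ aCF (k + 1) := by
    intro k
    rw [hfloor (k + 1)]
    exact Int.le_floor.2 (by exact_mod_cast (gt1 k).le)
  have hqpos : ∀ k, 1 ≤ q k := by
    have h : ∀ k, 1 ≤ q k ∧ 1 ≤ q (k + 1) := by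
      intro k
      induction k with
      | zero => exact ⟨by rw [hq0], by rw [hq1]; exact hA 0⟩
      | succ k ihk =>
        refine ⟨ihk.2, ?_⟩
        rw [hqrec k]
        nlinarith [hA (k + 1), ihk.1, ihk.2]
    exact fun k => (h k).1
  have hqmono : ∀ k, q k ≤ q (k + 1) := by
    intro k
    match k with
    | 0 => rw [hq0, hq1]; exact hA 0
    | (m + 1) =>
      rw [hqrec m]
      nlinarith [hA (m + 1), hqpos m, hqpos (m + 1)]
  have hqge : ∀ k : ℕ, (k : ℤ) ≤ q k := by
    have h : ∀ k : ℕ, (k : ℤ) ≤ q k ∧ ((k : ℤ) + 1) ≤ q (k + 1) := by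
      intro k
      induction k with
      | zero => constructor <;> simp [hq0, hq1, hA 0] <;> omega
      | succ k ihk =>
        refine ⟨by exact_mod_cast ihk.2, ?_⟩
        rw [hqrec k]
        push_cast
        nlinarith [hA (k + 1), hqpos k, hqpos (k + 1), ihk.1, ihk.2]
    exact fun k => (h k).1
  -- existence
  obtain ⟨b, hb0, hb1, hble, hbz, hbsup, hbsum⟩ :=
    ost_exists aCF q hq0 hq1 hqrec hA hqpos hqmono hqge N
  have hbfin : {k | b k ≠ 0}.Finite := by
    apply Set.Finite.subset (Set.finite_le_nat (N + 1))
    intro k hk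
    match k with
    | 0 => exact absurd hb0 hk
    | (m + 1) =>
      have h1 := hbsup m hk
      have h2 := hqge m
      have : (m : ℤ) ≤ N := le_trans h2 h1
      simp only [Set.mem_setOf_eq]
      omega
  have hfs : ∑ᶠ k : ℕ, (b (k + 1) : ℤ) * q k
      = ∑ k ∈ range (N + 1), (b (k + 1) : ℤ) * q k := by
    apply finsum_eq_sum_of_support_subset
    intro k hk
    have hk' : b (k + 1) ≠ 0 := by
      intro h
      apply hk
      simp [Function.mem_support, h]
    have h1 := hbsup k hk'
    have h2 := hqge k
    simp only [Finset.coe_range, Set.mem_Iio]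
    have : (k : ℤ) ≤ N := le_trans h2 h1
    omega
  refine ⟨b, ⟨hbfin, hb0, hb1, hble, hbz, by rw [hfs]; exact hbsum (N + 1) (by omega)⟩, ?_⟩
  -- uniqueness
  rintro c ⟨hcfin, hc0, hc1, hcle, hcz, hcsum⟩
  -- get common bound M for supports
  obtain ⟨M₁, hM₁⟩ := hcfin.bddAbove
  obtain ⟨M₂, hM₂⟩ := hbfin.bddAbove
  set M := max (M₁ + 1) (max (M₂ + 1) (N + 2)) with hM_def
  have hcM : ∀ k ≥ M, c k = 0 := by
    intro k hk
    by_contra h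
    have : k ≤ M₁ := hM₁ h
    omega
  have hbM : ∀ k ≥ M, b k = 0 := by
    intro k hk
    by_contra h
    have : k ≤ M₂ := hM₂ h
    omega
  have hcfs : ∑ᶠ k : ℕ, (c (k + 1) : ℤ) * q k
      = ∑ k ∈ range M, (c (k + 1) : ℤ) * q k := by
    apply finsum_eq_sum_of_support_subset
    intro k hk
    have hk' : c (k + 1) ≠ 0 := by
      intro h
      apply hk
      simp [Function.mem_support, h]
    simp only [Finset.coe_range, Set.mem_Iio]
    by_contra h
    exact hk' (hcM (k + 1) (by omega))
  have hbfs : ∑ᶠ k : ℕ, (b (k + 1) : ℤ) * q k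
      = ∑ k ∈ range M, (b (k + 1) : ℤ) * q k := by
    apply finsum_eq_sum_of_support_subset
    intro k hk
    have hk' : b (k + 1) ≠ 0 := by
      intro h
      apply hk
      simp [Function.mem_support, h]
    simp only [Finset.coe_range, Set.mem_Iio]
    by_contra h
    exact hk' (hbM (k + 1) (by omega))
  have hbsumN : (N : ℤ) = ∑ᶠ k : ℕ, (b (k + 1) : ℤ) * q k := by
    rw [hfs]; exact hbsum (N + 1) (by omega)
  have hSM : ∑ k ∈ range M, (c (k + 1) : ℤ) * q k
      = ∑ k ∈ range M, (b (k + 1) : ℤ) * q k := by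
    rw [← hcfs, ← hbfs, ← hcsum, ← hbsumN]
  -- show c = b
  by_contra hne
  have : ∃ k, c k ≠ b k := Function.ne_iff.1 hne
  set D := (range M).filter (fun k => c k ≠ b k) with hD_def
  have hDne : D.Nonempty := by
    obtain ⟨k, hk⟩ := this
    refine ⟨k, Finset.mem_filter.2 ⟨Finset.mem_range.2 ?_, hk⟩⟩
    by_contra h
    rw [hcM k (by omega), hbM k (by omega)] at hk
    exact hk rfl
  set n := D.max' hDne with hn_def
  have hnD : n ∈ D := D.max'_mem hDne
  have hnlt : n < M := Finset.mem_range.1 (Finset.mem_filter.1 hnD).1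
  have hnne : c n ≠ b n := (Finset.mem_filter.1 hnD).2
  have habove : ∀ k, n < k → c k = b k := by
    intro k hk
    by_contra h
    by_cases h2 : k < M
    · have : k ∈ D := Finset.mem_filter.2 ⟨Finset.mem_range.2 h2, h⟩
      have := Finset.le_max' D k this
      omega
    · rw [hcM k (by omega), hbM k (by omega)] at h
      exact h rfl
  have hn1 : 1 ≤ n := by
    rcases Nat.eq_zero_or_pos n with h | h
    · rw [h] at hnne; rw [hc0, hb0] at hnne; exact absurd rfl hnne
    · exact h
  obtain ⟨m, hm⟩ : ∃ m, n = m + 1 := ⟨n - 1, by omega⟩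
  have hS : ∑ k ∈ range (m + 1), (c (k + 1) : ℤ) * q k
      = ∑ k ∈ range (m + 1), (b (k + 1) : ℤ) * q k := by
    have hsplit : ∀ f : ℕ → ℤ, ∑ k ∈ range (m + 1), f k + ∑ k ∈ Ico (m + 1) M, f k
        = ∑ k ∈ range M, f k := fun f => Finset.sum_range_add_sum_Ico f (by omega)
    have htail : ∑ k ∈ Ico (m + 1) M, (c (k + 1) : ℤ) * q k
        = ∑ k ∈ Ico (m + 1) M, (b (k + 1) : ℤ) * q k := by
      apply Finset.sum_congr rfl
      intro k hk
      have : m + 1 ≤ k := (Finset.mem_Ico.1 hk).1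
      rw [habove (k + 1) (by omega)]
    have h1 := hsplit (fun k => (c (k + 1) : ℤ) * q k)
    have h2 := hsplit (fun k => (b (k + 1) : ℤ) * q k)
    rw [← h1, ← h2, htail] at hSM
    linarith
  rw [hm] at hnne
  rcases Nat.lt_or_ge (b (m + 1)) (c (m + 1)) with h | h
  · exact ost_core aCF q hq0 hq1 hqrec hqpos c b hb1 hble hbz m h hS
  · have h' : c (m + 1) < b (m + 1) := by omega
    exact ost_core aCF q hq0 hq1 hqrec hqpos b c hc1 hcle hcz m h' hS.symm
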